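/- The commutator subgroup B_6' of the braid group B_6 is generated by the three elements σ_1σ_2^{−1}, σ_1σ_3^{−1}, and α^2σ_1^{−10}, where α = σ_1σ_2σ_3σ_4σ_5. -/

import Mathlib

/-- Artin braid relators for the braid group on `n` strands, with generators
`FreeGroup.of i` corresponding to `σ_{i+1}` for `i : Fin (n-1)`. -/
def braidRels (n : ℕ) : Set (FreeGroup (Fin (n - 1))) :=
  {r | ∃ i j : Fin (n - 1),
      ((j : ℕ) ≥ (i : ℕ) + 2 ∧
        r = FreeGroup.of i * FreeGroup.of j * (FreeGroup.of i)⁻¹ * (FreeGroup.of j)⁻¹) ∨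
      ((j : ℕ) = (i : ℕ) + 1 ∧
        r = FreeGroup.of i * FreeGroup.of j * FreeGroup.of i *
          (FreeGroup.of j * FreeGroup.of i * FreeGroup.of j)⁻¹)}

/-- The braid group on `n` strands. -/
def BraidGroup (n : ℕ) : Type := PresentedGroup (braidRels n)

instance (n : ℕ) : Group (BraidGroup n) :=
  inferInstanceAs (Group (PresentedGroup (braidRels n)))

/-- The Artin generator `σ_i` of `BraidGroup n`, for `1 ≤ i ≤ n-1` (junk value `1` otherwise). -/
def σ {n : ℕ} (i : ℕ) : BraidGroup n :=
  if h : 1 ≤ i ∧ i < n then PresentedGroup.of (⟨i - 1, by omega⟩ : Fin (n - 1)) else 1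

/-- The element `α = σ_1 σ_2 ⋯ σ_{n-1}`. -/
def α (n : ℕ) : BraidGroup n := ((List.range (n - 1)).map (fun i => σ (i + 1))).prod

/-- The half-twist `σ_j` for an index `j` taken modulo `n`, defined by conjugating
`σ_1` by the rotation `α`: `σ_{1+m} = α^m σ_1 α^{-m}`. -/
def σm {n : ℕ} (j : ℤ) : BraidGroup n := (α n) ^ (j - 1) * σ 1 * (α n) ^ (1 - j)


namespace B6X

abbrev B6 := BraidGroup 6

def s (k : ℕ) : B6 := σ k

lemma s_def (k : ℕ) (h1 : 1 ≤ k) (h2 : k < 6) :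
    s k = PresentedGroup.of (⟨k - 1, by omega⟩ : Fin (6-1)) := dif_pos ⟨h1, h2⟩

lemma rel_mk {r : FreeGroup (Fin (6-1))} (hr : r ∈ braidRels 6) :
    PresentedGroup.mk (braidRels 6) r = 1 :=
  (QuotientGroup.eq_one_iff r).mpr (Subgroup.subset_normalClosure hr)

lemma braid_rel (k : ℕ) (h1 : 1 ≤ k) (h2 : k ≤ 4) :
    s k * s (k+1) * s k = s (k+1) * s k * s (k+1) := by
  have hik : k - 1 < 6 - 1 := by omega
  have hjk : k < 6 - 1 := by omega
  set i : Fin (6-1) := ⟨k - 1, hik⟩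
  set j : Fin (6-1) := ⟨k, hjk⟩
  have hr : (FreeGroup.of i * FreeGroup.of j * FreeGroup.of i *
      (FreeGroup.of j * FreeGroup.of i * FreeGroup.of j)⁻¹) ∈ braidRels 6 :=
    ⟨i, j, Or.inr ⟨by simp [i, j]; omega, rfl⟩⟩
  have h := rel_mk hr
  simp only [map_mul, map_inv, mul_inv_eq_one] at h
  have hs1 : s k = PresentedGroup.mk (braidRels 6) (FreeGroup.of i) := s_def k h1 (by omega)
  have hje : (⟨k + 1 - 1, by omega⟩ : Fin (6-1)) = j := by ext; simp [j]
  have hs2 : s (k+1) = PresentedGroup.mk (braidRels 6) (FreeGroup.of j) := by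
    rw [s_def (k+1) (by omega) (by omega), hje]; rfl
  rw [hs1, hs2]; exact h

lemma comm_rel (i j : ℕ) (h1 : 1 ≤ i) (h2 : i + 2 ≤ j) (h3 : j ≤ 5) :
    Commute (s i) (s j) := by
  have hik : i - 1 < 6 - 1 := by omega
  have hjk : j - 1 < 6 - 1 := by omega
  set i' : Fin (6-1) := ⟨i - 1, hik⟩
  set j' : Fin (6-1) := ⟨j - 1, hjk⟩
  have hr : (FreeGroup.of i' * FreeGroup.of j' * (FreeGroup.of i')⁻¹ * (FreeGroup.of j')⁻¹)
      ∈ braidRels 6 := ⟨i', j', Or.inl ⟨by simp [i', j']; omega, rfl⟩⟩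
  have h := rel_mk hr
  rw [map_mul, map_mul, map_inv, map_inv, map_mul] at h
  have hs1 : s i = PresentedGroup.mk (braidRels 6) (FreeGroup.of i') := s_def i h1 (by omega)
  have hs2 : s j = PresentedGroup.mk (braidRels 6) (FreeGroup.of j') := s_def j (by omega) (by omega)
  have : s i * s j * (s i)⁻¹ * (s j)⁻¹ = 1 := by rw [hs1, hs2]; exact h
  have h2 := mul_inv_eq_one.mp this
  exact mul_inv_eq_iff_eq_mul.mp h2

lemma A_eq : α 6 = s 1 * s 2 * s 3 * s 4 * s 5 := by
  show ((List.range (6-1)).map (fun i => σ (i + 1))).prod = _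
  norm_num [List.range_succ, s]
  group

end B6X

section Generic
variable {G : Type*} [Group G] {x y k i j u v g : G}

lemma bconj (h : x * y * x = y * x * y) : x * y * x⁻¹ = y⁻¹ * x * y := by
  apply mul_left_cancel (a := y)
  calc y * (x * y * x⁻¹) = y * x * y * x⁻¹ := by group
  _ = x * y * x * x⁻¹ := by rw [← h]
  _ = y * (y⁻¹ * x * y) := by group

lemma bconj_inv (h : x * y * x = y * x * y) : x * y⁻¹ * x⁻¹ = y⁻¹ * x⁻¹ * y := by
  calc x * y⁻¹ * x⁻¹ = (x * y * x⁻¹)⁻¹ := by group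
  _ = (y⁻¹ * x * y)⁻¹ := by rw [bconj h]
  _ = y⁻¹ * x⁻¹ * y := by group

lemma biconj (h : x * y * x = y * x * y) : x⁻¹ * y * x = y * x * y⁻¹ :=
  (bconj h.symm).symm

lemma biconj_inv (h : x * y * x = y * x * y) : x⁻¹ * y⁻¹ * x = y * x⁻¹ * y⁻¹ :=
  (bconj_inv h.symm).symm

lemma cconj (h : Commute g x) : g * x * g⁻¹ = x := by rw [h.eq]; group

lemma cconj' (h : Commute g x) : g⁻¹ * x * g = x := by simpa using cconj h.inv_left

lemma semiconj_conj (h : SemiconjBy g x y) : g * x * g⁻¹ = y := by rw [h.eq]; group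

-- S-lemmas : conjugation formulas
lemma S1 (hb : k * i * k = i * k * i) (hc : Commute k j) :
    k * (i * j⁻¹) * k⁻¹ = (i⁻¹ * k) * (i * j⁻¹) := by
  calc k * (i * j⁻¹) * k⁻¹ = (k * i * k⁻¹) * (k * j⁻¹ * k⁻¹) := by group
  _ = (i⁻¹ * k * i) * j⁻¹ := by rw [bconj hb, cconj hc.inv_right]
  _ = (i⁻¹ * k) * (i * j⁻¹) := by group

lemma S3 (hb : k * j * k = j * k * j) (hc : Commute k i) :
    k * (i * j⁻¹) * k⁻¹ = (i * j⁻¹) * (k⁻¹ * j) := by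
  calc k * (i * j⁻¹) * k⁻¹ = (k * i * k⁻¹) * (k * j⁻¹ * k⁻¹) := by group
  _ = i * (j⁻¹ * k⁻¹ * j) := by rw [cconj hc, bconj_inv hb]
  _ = (i * j⁻¹) * (k⁻¹ * j) := by group

lemma S9 (hb : u * v * u = v * u * v) :
    u * (u * v⁻¹) * u⁻¹ = (u * v⁻¹) * (u⁻¹ * v) := by
  calc u * (u * v⁻¹) * u⁻¹ = u * (u * v⁻¹ * u⁻¹) := by group
  _ = u * (v⁻¹ * u⁻¹ * v) := by rw [bconj_inv hb]
  _ = (u * v⁻¹) * (u⁻¹ * v) := by group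

lemma S11 (hb : u * v * u = v * u * v) :
    v * (u * v⁻¹) * v⁻¹ = (u⁻¹ * v) * (u * v⁻¹) := by
  calc v * (u * v⁻¹) * v⁻¹ = (v * u * v⁻¹) * v⁻¹ := by group
  _ = (u⁻¹ * v * u) * v⁻¹ := by rw [bconj hb.symm]
  _ = (u⁻¹ * v) * (u * v⁻¹) := by group

lemma S17 (hbi : k * i * k = i * k * i) (hbj : k * j * k = j * k * j) :
    k * (i * j⁻¹) * k⁻¹ = (i⁻¹ * k) * (i * j⁻¹) * (k⁻¹ * j) := by
  calc k * (i * j⁻¹) * k⁻¹ = (k * i * k⁻¹) * (k * j⁻¹ * k⁻¹) := by group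
  _ = (i⁻¹ * k * i) * (j⁻¹ * k⁻¹ * j) := by rw [bconj hbi, bconj_inv hbj]
  _ = (i⁻¹ * k) * (i * j⁻¹) * (k⁻¹ * j) := by group

lemma S6 (hb : k * i * k = i * k * i) (hc : Commute k j) :
    k⁻¹ * (i⁻¹ * j) * k = (i * k⁻¹) * (i⁻¹ * j) := by
  calc k⁻¹ * (i⁻¹ * j) * k = (k⁻¹ * i⁻¹ * k) * (k⁻¹ * j * k) := by group
  _ = (i * k⁻¹ * i⁻¹) * j := by rw [biconj_inv hb, cconj' hc]
  _ = (i * k⁻¹) * (i⁻¹ * j) := by group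

lemma S8 (hb : k * j * k = j * k * j) (hc : Commute k i) :
    k⁻¹ * (i⁻¹ * j) * k = (i⁻¹ * j) * (k * j⁻¹) := by
  calc k⁻¹ * (i⁻¹ * j) * k = (k⁻¹ * i⁻¹ * k) * (k⁻¹ * j * k) := by group
  _ = i⁻¹ * (j * k * j⁻¹) := by rw [cconj' hc.inv_right, biconj hb]
  _ = (i⁻¹ * j) * (k * j⁻¹) := by group

lemma S14 (hb : u * v * u = v * u * v) :
    u⁻¹ * (u⁻¹ * v) * u = (u⁻¹ * v) * (u * v⁻¹) := by
  calc u⁻¹ * (u⁻¹ * v) * u = u⁻¹ * (u⁻¹ * v * u) := by group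
  _ = u⁻¹ * (v * u * v⁻¹) := by rw [biconj hb]
  _ = (u⁻¹ * v) * (u * v⁻¹) := by group

lemma S16 (hb : u * v * u = v * u * v) :
    v⁻¹ * (u⁻¹ * v) * v = (u * v⁻¹) * (u⁻¹ * v) := by
  calc v⁻¹ * (u⁻¹ * v) * v = (v⁻¹ * u⁻¹ * v) * v := by group
  _ = (u * v⁻¹ * u⁻¹) * v := by rw [biconj_inv hb.symm]
  _ = (u * v⁻¹) * (u⁻¹ * v) := by group

lemma T1 : k⁻¹ * (i * j⁻¹) * k = (k⁻¹ * i) * (k⁻¹ * j)⁻¹ := by group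

lemma T2 : k * (i⁻¹ * j) * k⁻¹ = (k * i⁻¹) * (k * j⁻¹)⁻¹ := by group

lemma braid_comm_eq (hb : x * y * x = y * x * y) (hc : Commute x y) : x = y := by
  have h1 : x * (x * y) = x * (y * y) := by
    calc x * (x * y) = x * (y * x) := by rw [hc.eq]
    _ = x * y * x := by group
    _ = y * x * y := hb
    _ = x * y * y := by rw [← hc.eq]
    _ = x * (y * y) := by group
  exact mul_right_cancel (mul_left_cancel h1)

end Generic

namespace B6X

lemma br1 : s 1 * s 2 * s 1 = s 2 * s 1 * s 2 := braid_rel 1 (by norm_num) (by norm_num)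
lemma br2 : s 2 * s 3 * s 2 = s 3 * s 2 * s 3 := braid_rel 2 (by norm_num) (by norm_num)
lemma br3 : s 3 * s 4 * s 3 = s 4 * s 3 * s 4 := braid_rel 3 (by norm_num) (by norm_num)
lemma br4 : s 4 * s 5 * s 4 = s 5 * s 4 * s 5 := braid_rel 4 (by norm_num) (by norm_num)
lemma c13 : Commute (s 1) (s 3) := comm_rel 1 3 (by norm_num) (by norm_num) (by norm_num)
lemma c14 : Commute (s 1) (s 4) := comm_rel 1 4 (by norm_num) (by norm_num) (by norm_num)
lemma c15 : Commute (s 1) (s 5) := comm_rel 1 5 (by norm_num) (by norm_num) (by norm_num)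
lemma c24 : Commute (s 2) (s 4) := comm_rel 2 4 (by norm_num) (by norm_num) (by norm_num)
lemma c25 : Commute (s 2) (s 5) := comm_rel 2 5 (by norm_num) (by norm_num) (by norm_num)
lemma c35 : Commute (s 3) (s 5) := comm_rel 3 5 (by norm_num) (by norm_num) (by norm_num)

lemma sc1 : SemiconjBy (α 6) (s 1) (s 2) := by
  show α 6 * s 1 = s 2 * α 6
  rw [A_eq]
  have h : Commute (s 1) (s 3 * s 4 * s 5) := (c13.mul_right c14).mul_right c15
  calc s 1 * s 2 * s 3 * s 4 * s 5 * s 1 = (s 1 * s 2) * ((s 3 * s 4 * s 5) * s 1) := by group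
  _ = (s 1 * s 2) * (s 1 * (s 3 * s 4 * s 5)) := by rw [← h.eq]
  _ = (s 1 * s 2 * s 1) * (s 3 * s 4 * s 5) := by group
  _ = (s 2 * s 1 * s 2) * (s 3 * s 4 * s 5) := by rw [br1]
  _ = s 2 * (s 1 * s 2 * s 3 * s 4 * s 5) := by group

lemma sc2 : SemiconjBy (α 6) (s 2) (s 3) := by
  show α 6 * s 2 = s 3 * α 6
  rw [A_eq]
  have h : Commute (s 2) (s 4 * s 5) := c24.mul_right c25
  calc s 1 * s 2 * s 3 * s 4 * s 5 * s 2 = (s 1 * (s 2 * s 3)) * ((s 4 * s 5) * s 2) := by group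
  _ = (s 1 * (s 2 * s 3)) * (s 2 * (s 4 * s 5)) := by rw [← h.eq]
  _ = s 1 * (s 2 * s 3 * s 2) * (s 4 * s 5) := by group
  _ = s 1 * (s 3 * s 2 * s 3) * (s 4 * s 5) := by rw [br2]
  _ = (s 1 * s 3) * (s 2 * s 3 * s 4 * s 5) := by group
  _ = (s 3 * s 1) * (s 2 * s 3 * s 4 * s 5) := by rw [c13.eq]
  _ = s 3 * (s 1 * s 2 * s 3 * s 4 * s 5) := by group

lemma sc3 : SemiconjBy (α 6) (s 3) (s 4) := by
  show α 6 * s 3 = s 4 * α 6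
  rw [A_eq]
  calc s 1 * s 2 * s 3 * s 4 * s 5 * s 3 = (s 1 * s 2 * s 3 * s 4) * (s 5 * s 3) := by group
  _ = (s 1 * s 2 * s 3 * s 4) * (s 3 * s 5) := by rw [← c35.eq]
  _ = (s 1 * s 2) * (s 3 * s 4 * s 3) * s 5 := by group
  _ = (s 1 * s 2) * (s 4 * s 3 * s 4) * s 5 := by rw [br3]
  _ = s 1 * (s 2 * s 4) * (s 3 * s 4 * s 5) := by group
  _ = s 1 * (s 4 * s 2) * (s 3 * s 4 * s 5) := by rw [c24.eq]
  _ = (s 1 * s 4) * (s 2 * s 3 * s 4 * s 5) := by group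
  _ = (s 4 * s 1) * (s 2 * s 3 * s 4 * s 5) := by rw [c14.eq]
  _ = s 4 * (s 1 * s 2 * s 3 * s 4 * s 5) := by group

lemma sc4 : SemiconjBy (α 6) (s 4) (s 5) := by
  show α 6 * s 4 = s 5 * α 6
  rw [A_eq]
  calc s 1 * s 2 * s 3 * s 4 * s 5 * s 4 = (s 1 * s 2 * s 3) * (s 4 * s 5 * s 4) := by group
  _ = (s 1 * s 2 * s 3) * (s 5 * s 4 * s 5) := by rw [br4]
  _ = (s 1 * s 2) * (s 3 * s 5) * (s 4 * s 5) := by group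
  _ = (s 1 * s 2) * (s 5 * s 3) * (s 4 * s 5) := by rw [c35.eq]
  _ = s 1 * (s 2 * s 5) * (s 3 * s 4 * s 5) := by group
  _ = s 1 * (s 5 * s 2) * (s 3 * s 4 * s 5) := by rw [c25.eq]
  _ = (s 1 * s 5) * (s 2 * s 3 * s 4 * s 5) := by group
  _ = (s 5 * s 1) * (s 2 * s 3 * s 4 * s 5) := by rw [c15.eq]
  _ = s 5 * (s 1 * s 2 * s 3 * s 4 * s 5) := by group

lemma sc13 : SemiconjBy (α 6 ^ 2) (s 1) (s 3) := by
  have := sc2.mul_left sc1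
  rwa [← pow_two] at this
lemma sc24 : SemiconjBy (α 6 ^ 2) (s 2) (s 4) := by
  have := sc3.mul_left sc2
  rwa [← pow_two] at this
lemma sc35 : SemiconjBy (α 6 ^ 2) (s 3) (s 5) := by
  have := sc4.mul_left sc3
  rwa [← pow_two] at this

def p (i j : ℕ) : B6 := s i * (s j)⁻¹
def q (i j : ℕ) : B6 := (s i)⁻¹ * s j

def a : B6 := σ 1 * (σ 2)⁻¹
def b : B6 := σ 1 * (σ 3)⁻¹
def c : B6 := (α 6) ^ 2 * ((σ 1 : BraidGroup 6) ^ 10)⁻¹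

lemma csc1 : SemiconjBy c (s 1) (s 3) := by
  have h1 : SemiconjBy ((s 1 ^ 10)⁻¹) (s 1) (s 1) := by
    show _ = _
    group
  exact sc13.mul_left h1

lemma csc3 : SemiconjBy c (s 3) (s 5) := by
  have h1 : SemiconjBy ((s 1 ^ 10)⁻¹) (s 3) (s 3) :=
    ((c13.pow_left 10).inv_left : Commute ((s 1 ^ 10)⁻¹) (s 3))
  exact sc35.mul_left h1

lemma csc2 : SemiconjBy c (s 2) ((s 3 ^ 10)⁻¹ * s 4 * s 3 ^ 10) := by
  have h1 : SemiconjBy ((s 1 ^ 10)⁻¹) (s 2) ((s 1 ^ 10)⁻¹ * s 2 * s 1 ^ 10) := by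
    show _ = _
    group
  have h2 : SemiconjBy (α 6 ^ 2) ((s 1 ^ 10)⁻¹ * s 2 * s 1 ^ 10) ((s 3 ^ 10)⁻¹ * s 4 * s 3 ^ 10) :=
    (((sc13.pow_right 10).inv_right.mul_right sc24).mul_right (sc13.pow_right 10))
  exact h2.mul_left h1

end B6X

namespace B6X

def Pset : Set B6 := {p 1 2, p 1 3, p 1 4, p 1 5, p 2 3, p 2 4, p 2 5, p 3 4, p 3 5, p 4 5, q 1 2, q 2 3, q 3 4, q 4 5}

def PP : Subgroup B6 := Subgroup.closure Pset

lemma hp11 : p 1 1 ∈ PP := by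
  rw [show p 1 1 = 1 by simp [p]]; exact one_mem PP
lemma hp12 : p 1 2 ∈ PP := Subgroup.subset_closure (by simp [Pset])
lemma hp13 : p 1 3 ∈ PP := Subgroup.subset_closure (by simp [Pset])
lemma hp14 : p 1 4 ∈ PP := Subgroup.subset_closure (by simp [Pset])
lemma hp15 : p 1 5 ∈ PP := Subgroup.subset_closure (by simp [Pset])
lemma hp21 : p 2 1 ∈ PP := by
  rw [show p 2 1 = (p 1 2)⁻¹ by simp [p]]; exact inv_mem hp12
lemma hp22 : p 2 2 ∈ PP := by
  rw [show p 2 2 = 1 by simp [p]]; exact one_mem PP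
lemma hp23 : p 2 3 ∈ PP := Subgroup.subset_closure (by simp [Pset])
lemma hp24 : p 2 4 ∈ PP := Subgroup.subset_closure (by simp [Pset])
lemma hp25 : p 2 5 ∈ PP := Subgroup.subset_closure (by simp [Pset])
lemma hp31 : p 3 1 ∈ PP := by
  rw [show p 3 1 = (p 1 3)⁻¹ by simp [p]]; exact inv_mem hp13
lemma hp32 : p 3 2 ∈ PP := by
  rw [show p 3 2 = (p 2 3)⁻¹ by simp [p]]; exact inv_mem hp23
lemma hp33 : p 3 3 ∈ PP := by
  rw [show p 3 3 = 1 by simp [p]]; exact one_mem PP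
lemma hp34 : p 3 4 ∈ PP := Subgroup.subset_closure (by simp [Pset])
lemma hp35 : p 3 5 ∈ PP := Subgroup.subset_closure (by simp [Pset])
lemma hp41 : p 4 1 ∈ PP := by
  rw [show p 4 1 = (p 1 4)⁻¹ by simp [p]]; exact inv_mem hp14
lemma hp42 : p 4 2 ∈ PP := by
  rw [show p 4 2 = (p 2 4)⁻¹ by simp [p]]; exact inv_mem hp24
lemma hp43 : p 4 3 ∈ PP := by
  rw [show p 4 3 = (p 3 4)⁻¹ by simp [p]]; exact inv_mem hp34
lemma hp44 : p 4 4 ∈ PP := by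
  rw [show p 4 4 = 1 by simp [p]]; exact one_mem PP
lemma hp45 : p 4 5 ∈ PP := Subgroup.subset_closure (by simp [Pset])
lemma hp51 : p 5 1 ∈ PP := by
  rw [show p 5 1 = (p 1 5)⁻¹ by simp [p]]; exact inv_mem hp15
lemma hp52 : p 5 2 ∈ PP := by
  rw [show p 5 2 = (p 2 5)⁻¹ by simp [p]]; exact inv_mem hp25
lemma hp53 : p 5 3 ∈ PP := by
  rw [show p 5 3 = (p 3 5)⁻¹ by simp [p]]; exact inv_mem hp35
lemma hp54 : p 5 4 ∈ PP := by
  rw [show p 5 4 = (p 4 5)⁻¹ by simp [p]]; exact inv_mem hp45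
lemma hp55 : p 5 5 ∈ PP := by
  rw [show p 5 5 = 1 by simp [p]]; exact one_mem PP

lemma hq11 : q 1 1 ∈ PP := by
  rw [show q 1 1 = 1 by simp [q]]; exact one_mem PP
lemma hq12 : q 1 2 ∈ PP := Subgroup.subset_closure (by simp [Pset])
lemma hq13 : q 1 3 ∈ PP := by
  rw [show q 1 3 = p 3 1 from (c13).inv_left.eq]; exact hp31
lemma hq14 : q 1 4 ∈ PP := by
  rw [show q 1 4 = p 4 1 from (c14).inv_left.eq]; exact hp41
lemma hq15 : q 1 5 ∈ PP := by
  rw [show q 1 5 = p 5 1 from (c15).inv_left.eq]; exact hp51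
lemma hq21 : q 2 1 ∈ PP := by
  rw [show q 2 1 = (q 1 2)⁻¹ by simp [q]]; exact inv_mem hq12
lemma hq22 : q 2 2 ∈ PP := by
  rw [show q 2 2 = 1 by simp [q]]; exact one_mem PP
lemma hq23 : q 2 3 ∈ PP := Subgroup.subset_closure (by simp [Pset])
lemma hq24 : q 2 4 ∈ PP := by
  rw [show q 2 4 = p 4 2 from (c24).inv_left.eq]; exact hp42
lemma hq25 : q 2 5 ∈ PP := by
  rw [show q 2 5 = p 5 2 from (c25).inv_left.eq]; exact hp52
lemma hq31 : q 3 1 ∈ PP := by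
  rw [show q 3 1 = p 1 3 from (c13.symm).inv_left.eq]; exact hp13
lemma hq32 : q 3 2 ∈ PP := by
  rw [show q 3 2 = (q 2 3)⁻¹ by simp [q]]; exact inv_mem hq23
lemma hq33 : q 3 3 ∈ PP := by
  rw [show q 3 3 = 1 by simp [q]]; exact one_mem PP
lemma hq34 : q 3 4 ∈ PP := Subgroup.subset_closure (by simp [Pset])
lemma hq35 : q 3 5 ∈ PP := by
  rw [show q 3 5 = p 5 3 from (c35).inv_left.eq]; exact hp53
lemma hq41 : q 4 1 ∈ PP := by
  rw [show q 4 1 = p 1 4 from (c14.symm).inv_left.eq]; exact hp14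
lemma hq42 : q 4 2 ∈ PP := by
  rw [show q 4 2 = p 2 4 from (c24.symm).inv_left.eq]; exact hp24
lemma hq43 : q 4 3 ∈ PP := by
  rw [show q 4 3 = (q 3 4)⁻¹ by simp [q]]; exact inv_mem hq34
lemma hq44 : q 4 4 ∈ PP := by
  rw [show q 4 4 = 1 by simp [q]]; exact one_mem PP
lemma hq45 : q 4 5 ∈ PP := Subgroup.subset_closure (by simp [Pset])
lemma hq51 : q 5 1 ∈ PP := by
  rw [show q 5 1 = p 1 5 from (c15.symm).inv_left.eq]; exact hp15
lemma hq52 : q 5 2 ∈ PP := by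
  rw [show q 5 2 = p 2 5 from (c25.symm).inv_left.eq]; exact hp25
lemma hq53 : q 5 3 ∈ PP := by
  rw [show q 5 3 = p 3 5 from (c35.symm).inv_left.eq]; exact hp35
lemma hq54 : q 5 4 ∈ PP := by
  rw [show q 5 4 = (q 4 5)⁻¹ by simp [q]]; exact inv_mem hq45
lemma hq55 : q 5 5 ∈ PP := by
  rw [show q 5 5 = 1 by simp [q]]; exact one_mem PP

lemma stab_p (k : ℕ) (hk1 : 1 ≤ k) (hk5 : k ≤ 5) : ∀ x ∈ PP, s k * x * (s k)⁻¹ ∈ PP := by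
  intro x hx
  induction hx using Subgroup.closure_induction with
  | one =>
    simpa using one_mem PP
  | mul x y hx hy ihx ihy =>
    rw [show s k * (x * y) * (s k)⁻¹ = (s k * x * (s k)⁻¹) * (s k * y * (s k)⁻¹) by group]
    exact mul_mem ihx ihy
  | inv x hx ihx =>
    rw [show s k * x⁻¹ * (s k)⁻¹ = (s k * x * (s k)⁻¹)⁻¹ by group]
    exact inv_mem ihx
  | mem x hx =>
    simp only [Pset, Set.mem_insert_iff, Set.mem_singleton_iff] at hx
    rcases hx with rfl|rfl|rfl|rfl|rfl|rfl|rfl|rfl|rfl|rfl|rfl|rfl|rfl|rfl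
    · interval_cases k
      · show s 1 * (s 1 * (s 2)⁻¹) * (s 1)⁻¹ ∈ PP
        rw [S9 br1]
        exact mul_mem hp12 hq12
      · show s 2 * (s 1 * (s 2)⁻¹) * (s 2)⁻¹ ∈ PP
        rw [S11 br1]
        exact mul_mem hq12 hp12
      · show s 3 * (s 1 * (s 2)⁻¹) * (s 3)⁻¹ ∈ PP
        rw [S3 (br2).symm (c13.symm)]
        exact mul_mem hp12 hq32
      · show s 4 * (s 1 * (s 2)⁻¹) * (s 4)⁻¹ ∈ PP
        rw [cconj ((c14.symm).mul_right (c24.symm).inv_right)]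
        exact hp12
      · show s 5 * (s 1 * (s 2)⁻¹) * (s 5)⁻¹ ∈ PP
        rw [cconj ((c15.symm).mul_right (c25.symm).inv_right)]
        exact hp12
    · interval_cases k
      · show s 1 * (s 1 * (s 3)⁻¹) * (s 1)⁻¹ ∈ PP
        rw [cconj (((Commute.refl (s 1))).mul_right (c13).inv_right)]
        exact hp13
      · show s 2 * (s 1 * (s 3)⁻¹) * (s 2)⁻¹ ∈ PP
        rw [S17 (br1).symm br2]
        exact mul_mem (mul_mem hq12 hp13) hq23
      · show s 3 * (s 1 * (s 3)⁻¹) * (s 3)⁻¹ ∈ PP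
        rw [cconj ((c13.symm).mul_right ((Commute.refl (s 3))).inv_right)]
        exact hp13
      · show s 4 * (s 1 * (s 3)⁻¹) * (s 4)⁻¹ ∈ PP
        rw [S3 (br3).symm (c14.symm)]
        exact mul_mem hp13 hq43
      · show s 5 * (s 1 * (s 3)⁻¹) * (s 5)⁻¹ ∈ PP
        rw [cconj ((c15.symm).mul_right (c35.symm).inv_right)]
        exact hp13
    · interval_cases k
      · show s 1 * (s 1 * (s 4)⁻¹) * (s 1)⁻¹ ∈ PP
        rw [cconj (((Commute.refl (s 1))).mul_right (c14).inv_right)]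
        exact hp14
      · show s 2 * (s 1 * (s 4)⁻¹) * (s 2)⁻¹ ∈ PP
        rw [S1 (br1).symm (c24)]
        exact mul_mem hq12 hp14
      · show s 3 * (s 1 * (s 4)⁻¹) * (s 3)⁻¹ ∈ PP
        rw [S3 br3 (c13.symm)]
        exact mul_mem hp14 hq34
      · show s 4 * (s 1 * (s 4)⁻¹) * (s 4)⁻¹ ∈ PP
        rw [cconj ((c14.symm).mul_right ((Commute.refl (s 4))).inv_right)]
        exact hp14
      · show s 5 * (s 1 * (s 4)⁻¹) * (s 5)⁻¹ ∈ PP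
        rw [S3 (br4).symm (c15.symm)]
        exact mul_mem hp14 hq54
    · interval_cases k
      · show s 1 * (s 1 * (s 5)⁻¹) * (s 1)⁻¹ ∈ PP
        rw [cconj (((Commute.refl (s 1))).mul_right (c15).inv_right)]
        exact hp15
      · show s 2 * (s 1 * (s 5)⁻¹) * (s 2)⁻¹ ∈ PP
        rw [S1 (br1).symm (c25)]
        exact mul_mem hq12 hp15
      · show s 3 * (s 1 * (s 5)⁻¹) * (s 3)⁻¹ ∈ PP
        rw [cconj ((c13.symm).mul_right (c35).inv_right)]
        exact hp15
      · show s 4 * (s 1 * (s 5)⁻¹) * (s 4)⁻¹ ∈ PP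
        rw [S3 br4 (c14.symm)]
        exact mul_mem hp15 hq45
      · show s 5 * (s 1 * (s 5)⁻¹) * (s 5)⁻¹ ∈ PP
        rw [cconj ((c15.symm).mul_right ((Commute.refl (s 5))).inv_right)]
        exact hp15
    · interval_cases k
      · show s 1 * (s 2 * (s 3)⁻¹) * (s 1)⁻¹ ∈ PP
        rw [S1 br1 (c13)]
        exact mul_mem hq21 hp23
      · show s 2 * (s 2 * (s 3)⁻¹) * (s 2)⁻¹ ∈ PP
        rw [S9 br2]
        exact mul_mem hp23 hq23
      · show s 3 * (s 2 * (s 3)⁻¹) * (s 3)⁻¹ ∈ PP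
        rw [S11 br2]
        exact mul_mem hq23 hp23
      · show s 4 * (s 2 * (s 3)⁻¹) * (s 4)⁻¹ ∈ PP
        rw [S3 (br3).symm (c24.symm)]
        exact mul_mem hp23 hq43
      · show s 5 * (s 2 * (s 3)⁻¹) * (s 5)⁻¹ ∈ PP
        rw [cconj ((c25.symm).mul_right (c35.symm).inv_right)]
        exact hp23
    · interval_cases k
      · show s 1 * (s 2 * (s 4)⁻¹) * (s 1)⁻¹ ∈ PP
        rw [S1 br1 (c14)]
        exact mul_mem hq21 hp24
      · show s 2 * (s 2 * (s 4)⁻¹) * (s 2)⁻¹ ∈ PP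
        rw [cconj (((Commute.refl (s 2))).mul_right (c24).inv_right)]
        exact hp24
      · show s 3 * (s 2 * (s 4)⁻¹) * (s 3)⁻¹ ∈ PP
        rw [S17 (br2).symm br3]
        exact mul_mem (mul_mem hq23 hp24) hq34
      · show s 4 * (s 2 * (s 4)⁻¹) * (s 4)⁻¹ ∈ PP
        rw [cconj ((c24.symm).mul_right ((Commute.refl (s 4))).inv_right)]
        exact hp24
      · show s 5 * (s 2 * (s 4)⁻¹) * (s 5)⁻¹ ∈ PP
        rw [S3 (br4).symm (c25.symm)]
        exact mul_mem hp24 hq54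
    · interval_cases k
      · show s 1 * (s 2 * (s 5)⁻¹) * (s 1)⁻¹ ∈ PP
        rw [S1 br1 (c15)]
        exact mul_mem hq21 hp25
      · show s 2 * (s 2 * (s 5)⁻¹) * (s 2)⁻¹ ∈ PP
        rw [cconj (((Commute.refl (s 2))).mul_right (c25).inv_right)]
        exact hp25
      · show s 3 * (s 2 * (s 5)⁻¹) * (s 3)⁻¹ ∈ PP
        rw [S1 (br2).symm (c35)]
        exact mul_mem hq23 hp25
      · show s 4 * (s 2 * (s 5)⁻¹) * (s 4)⁻¹ ∈ PP
        rw [S3 br4 (c24.symm)]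
        exact mul_mem hp25 hq45
      · show s 5 * (s 2 * (s 5)⁻¹) * (s 5)⁻¹ ∈ PP
        rw [cconj ((c25.symm).mul_right ((Commute.refl (s 5))).inv_right)]
        exact hp25
    · interval_cases k
      · show s 1 * (s 3 * (s 4)⁻¹) * (s 1)⁻¹ ∈ PP
        rw [cconj ((c13).mul_right (c14).inv_right)]
        exact hp34
      · show s 2 * (s 3 * (s 4)⁻¹) * (s 2)⁻¹ ∈ PP
        rw [S1 br2 (c24)]
        exact mul_mem hq32 hp34
      · show s 3 * (s 3 * (s 4)⁻¹) * (s 3)⁻¹ ∈ PP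
        rw [S9 br3]
        exact mul_mem hp34 hq34
      · show s 4 * (s 3 * (s 4)⁻¹) * (s 4)⁻¹ ∈ PP
        rw [S11 br3]
        exact mul_mem hq34 hp34
      · show s 5 * (s 3 * (s 4)⁻¹) * (s 5)⁻¹ ∈ PP
        rw [S3 (br4).symm (c35.symm)]
        exact mul_mem hp34 hq54
    · interval_cases k
      · show s 1 * (s 3 * (s 5)⁻¹) * (s 1)⁻¹ ∈ PP
        rw [cconj ((c13).mul_right (c15).inv_right)]
        exact hp35
      · show s 2 * (s 3 * (s 5)⁻¹) * (s 2)⁻¹ ∈ PP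
        rw [S1 br2 (c25)]
        exact mul_mem hq32 hp35
      · show s 3 * (s 3 * (s 5)⁻¹) * (s 3)⁻¹ ∈ PP
        rw [cconj (((Commute.refl (s 3))).mul_right (c35).inv_right)]
        exact hp35
      · show s 4 * (s 3 * (s 5)⁻¹) * (s 4)⁻¹ ∈ PP
        rw [S17 (br3).symm br4]
        exact mul_mem (mul_mem hq34 hp35) hq45
      · show s 5 * (s 3 * (s 5)⁻¹) * (s 5)⁻¹ ∈ PP
        rw [cconj ((c35.symm).mul_right ((Commute.refl (s 5))).inv_right)]
        exact hp35
    · interval_cases k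
      · show s 1 * (s 4 * (s 5)⁻¹) * (s 1)⁻¹ ∈ PP
        rw [cconj ((c14).mul_right (c15).inv_right)]
        exact hp45
      · show s 2 * (s 4 * (s 5)⁻¹) * (s 2)⁻¹ ∈ PP
        rw [cconj ((c24).mul_right (c25).inv_right)]
        exact hp45
      · show s 3 * (s 4 * (s 5)⁻¹) * (s 3)⁻¹ ∈ PP
        rw [S1 br3 (c35)]
        exact mul_mem hq43 hp45
      · show s 4 * (s 4 * (s 5)⁻¹) * (s 4)⁻¹ ∈ PP
        rw [S9 br4]
        exact mul_mem hp45 hq45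
      · show s 5 * (s 4 * (s 5)⁻¹) * (s 5)⁻¹ ∈ PP
        rw [S11 br4]
        exact mul_mem hq45 hp45
    · interval_cases k
      · show s 1 * ((s 1)⁻¹ * s 2) * (s 1)⁻¹ ∈ PP
        rw [T2]
        exact mul_mem hp11 (inv_mem hp12)
      · show s 2 * ((s 1)⁻¹ * s 2) * (s 2)⁻¹ ∈ PP
        rw [T2]
        exact mul_mem hp21 (inv_mem hp22)
      · show s 3 * ((s 1)⁻¹ * s 2) * (s 3)⁻¹ ∈ PP
        rw [T2]
        exact mul_mem hp31 (inv_mem hp32)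
      · show s 4 * ((s 1)⁻¹ * s 2) * (s 4)⁻¹ ∈ PP
        rw [T2]
        exact mul_mem hp41 (inv_mem hp42)
      · show s 5 * ((s 1)⁻¹ * s 2) * (s 5)⁻¹ ∈ PP
        rw [T2]
        exact mul_mem hp51 (inv_mem hp52)
    · interval_cases k
      · show s 1 * ((s 2)⁻¹ * s 3) * (s 1)⁻¹ ∈ PP
        rw [T2]
        exact mul_mem hp12 (inv_mem hp13)
      · show s 2 * ((s 2)⁻¹ * s 3) * (s 2)⁻¹ ∈ PP
        rw [T2]
        exact mul_mem hp22 (inv_mem hp23)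
      · show s 3 * ((s 2)⁻¹ * s 3) * (s 3)⁻¹ ∈ PP
        rw [T2]
        exact mul_mem hp32 (inv_mem hp33)
      · show s 4 * ((s 2)⁻¹ * s 3) * (s 4)⁻¹ ∈ PP
        rw [T2]
        exact mul_mem hp42 (inv_mem hp43)
      · show s 5 * ((s 2)⁻¹ * s 3) * (s 5)⁻¹ ∈ PP
        rw [T2]
        exact mul_mem hp52 (inv_mem hp53)
    · interval_cases k
      · show s 1 * ((s 3)⁻¹ * s 4) * (s 1)⁻¹ ∈ PP
        rw [T2]
        exact mul_mem hp13 (inv_mem hp14)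
      · show s 2 * ((s 3)⁻¹ * s 4) * (s 2)⁻¹ ∈ PP
        rw [T2]
        exact mul_mem hp23 (inv_mem hp24)
      · show s 3 * ((s 3)⁻¹ * s 4) * (s 3)⁻¹ ∈ PP
        rw [T2]
        exact mul_mem hp33 (inv_mem hp34)
      · show s 4 * ((s 3)⁻¹ * s 4) * (s 4)⁻¹ ∈ PP
        rw [T2]
        exact mul_mem hp43 (inv_mem hp44)
      · show s 5 * ((s 3)⁻¹ * s 4) * (s 5)⁻¹ ∈ PP
        rw [T2]
        exact mul_mem hp53 (inv_mem hp54)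
    · interval_cases k
      · show s 1 * ((s 4)⁻¹ * s 5) * (s 1)⁻¹ ∈ PP
        rw [T2]
        exact mul_mem hp14 (inv_mem hp15)
      · show s 2 * ((s 4)⁻¹ * s 5) * (s 2)⁻¹ ∈ PP
        rw [T2]
        exact mul_mem hp24 (inv_mem hp25)
      · show s 3 * ((s 4)⁻¹ * s 5) * (s 3)⁻¹ ∈ PP
        rw [T2]
        exact mul_mem hp34 (inv_mem hp35)
      · show s 4 * ((s 4)⁻¹ * s 5) * (s 4)⁻¹ ∈ PP
        rw [T2]
        exact mul_mem hp44 (inv_mem hp45)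
      · show s 5 * ((s 4)⁻¹ * s 5) * (s 5)⁻¹ ∈ PP
        rw [T2]
        exact mul_mem hp54 (inv_mem hp55)

lemma stab_m (k : ℕ) (hk1 : 1 ≤ k) (hk5 : k ≤ 5) : ∀ x ∈ PP, (s k)⁻¹ * x * s k ∈ PP := by
  intro x hx
  induction hx using Subgroup.closure_induction with
  | one =>
    simpa using one_mem PP
  | mul x y hx hy ihx ihy =>
    rw [show (s k)⁻¹ * (x * y) * s k = ((s k)⁻¹ * x * s k) * ((s k)⁻¹ * y * s k) by group]
    exact mul_mem ihx ihy
  | inv x hx ihx =>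
    rw [show (s k)⁻¹ * x⁻¹ * s k = ((s k)⁻¹ * x * s k)⁻¹ by group]
    exact inv_mem ihx
  | mem x hx =>
    simp only [Pset, Set.mem_insert_iff, Set.mem_singleton_iff] at hx
    rcases hx with rfl|rfl|rfl|rfl|rfl|rfl|rfl|rfl|rfl|rfl|rfl|rfl|rfl|rfl
    · interval_cases k
      · show (s 1)⁻¹ * (s 1 * (s 2)⁻¹) * s 1 ∈ PP
        rw [T1]
        exact mul_mem hq11 (inv_mem hq12)
      · show (s 2)⁻¹ * (s 1 * (s 2)⁻¹) * s 2 ∈ PP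
        rw [T1]
        exact mul_mem hq21 (inv_mem hq22)
      · show (s 3)⁻¹ * (s 1 * (s 2)⁻¹) * s 3 ∈ PP
        rw [T1]
        exact mul_mem hq31 (inv_mem hq32)
      · show (s 4)⁻¹ * (s 1 * (s 2)⁻¹) * s 4 ∈ PP
        rw [T1]
        exact mul_mem hq41 (inv_mem hq42)
      · show (s 5)⁻¹ * (s 1 * (s 2)⁻¹) * s 5 ∈ PP
        rw [T1]
        exact mul_mem hq51 (inv_mem hq52)
    · interval_cases k
      · show (s 1)⁻¹ * (s 1 * (s 3)⁻¹) * s 1 ∈ PP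
        rw [T1]
        exact mul_mem hq11 (inv_mem hq13)
      · show (s 2)⁻¹ * (s 1 * (s 3)⁻¹) * s 2 ∈ PP
        rw [T1]
        exact mul_mem hq21 (inv_mem hq23)
      · show (s 3)⁻¹ * (s 1 * (s 3)⁻¹) * s 3 ∈ PP
        rw [T1]
        exact mul_mem hq31 (inv_mem hq33)
      · show (s 4)⁻¹ * (s 1 * (s 3)⁻¹) * s 4 ∈ PP
        rw [T1]
        exact mul_mem hq41 (inv_mem hq43)
      · show (s 5)⁻¹ * (s 1 * (s 3)⁻¹) * s 5 ∈ PP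
        rw [T1]
        exact mul_mem hq51 (inv_mem hq53)
    · interval_cases k
      · show (s 1)⁻¹ * (s 1 * (s 4)⁻¹) * s 1 ∈ PP
        rw [T1]
        exact mul_mem hq11 (inv_mem hq14)
      · show (s 2)⁻¹ * (s 1 * (s 4)⁻¹) * s 2 ∈ PP
        rw [T1]
        exact mul_mem hq21 (inv_mem hq24)
      · show (s 3)⁻¹ * (s 1 * (s 4)⁻¹) * s 3 ∈ PP
        rw [T1]
        exact mul_mem hq31 (inv_mem hq34)
      · show (s 4)⁻¹ * (s 1 * (s 4)⁻¹) * s 4 ∈ PP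
        rw [T1]
        exact mul_mem hq41 (inv_mem hq44)
      · show (s 5)⁻¹ * (s 1 * (s 4)⁻¹) * s 5 ∈ PP
        rw [T1]
        exact mul_mem hq51 (inv_mem hq54)
    · interval_cases k
      · show (s 1)⁻¹ * (s 1 * (s 5)⁻¹) * s 1 ∈ PP
        rw [T1]
        exact mul_mem hq11 (inv_mem hq15)
      · show (s 2)⁻¹ * (s 1 * (s 5)⁻¹) * s 2 ∈ PP
        rw [T1]
        exact mul_mem hq21 (inv_mem hq25)
      · show (s 3)⁻¹ * (s 1 * (s 5)⁻¹) * s 3 ∈ PP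
        rw [T1]
        exact mul_mem hq31 (inv_mem hq35)
      · show (s 4)⁻¹ * (s 1 * (s 5)⁻¹) * s 4 ∈ PP
        rw [T1]
        exact mul_mem hq41 (inv_mem hq45)
      · show (s 5)⁻¹ * (s 1 * (s 5)⁻¹) * s 5 ∈ PP
        rw [T1]
        exact mul_mem hq51 (inv_mem hq55)
    · interval_cases k
      · show (s 1)⁻¹ * (s 2 * (s 3)⁻¹) * s 1 ∈ PP
        rw [T1]
        exact mul_mem hq12 (inv_mem hq13)
      · show (s 2)⁻¹ * (s 2 * (s 3)⁻¹) * s 2 ∈ PP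
        rw [T1]
        exact mul_mem hq22 (inv_mem hq23)
      · show (s 3)⁻¹ * (s 2 * (s 3)⁻¹) * s 3 ∈ PP
        rw [T1]
        exact mul_mem hq32 (inv_mem hq33)
      · show (s 4)⁻¹ * (s 2 * (s 3)⁻¹) * s 4 ∈ PP
        rw [T1]
        exact mul_mem hq42 (inv_mem hq43)
      · show (s 5)⁻¹ * (s 2 * (s 3)⁻¹) * s 5 ∈ PP
        rw [T1]
        exact mul_mem hq52 (inv_mem hq53)
    · interval_cases k
      · show (s 1)⁻¹ * (s 2 * (s 4)⁻¹) * s 1 ∈ PP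
        rw [T1]
        exact mul_mem hq12 (inv_mem hq14)
      · show (s 2)⁻¹ * (s 2 * (s 4)⁻¹) * s 2 ∈ PP
        rw [T1]
        exact mul_mem hq22 (inv_mem hq24)
      · show (s 3)⁻¹ * (s 2 * (s 4)⁻¹) * s 3 ∈ PP
        rw [T1]
        exact mul_mem hq32 (inv_mem hq34)
      · show (s 4)⁻¹ * (s 2 * (s 4)⁻¹) * s 4 ∈ PP
        rw [T1]
        exact mul_mem hq42 (inv_mem hq44)
      · show (s 5)⁻¹ * (s 2 * (s 4)⁻¹) * s 5 ∈ PP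
        rw [T1]
        exact mul_mem hq52 (inv_mem hq54)
    · interval_cases k
      · show (s 1)⁻¹ * (s 2 * (s 5)⁻¹) * s 1 ∈ PP
        rw [T1]
        exact mul_mem hq12 (inv_mem hq15)
      · show (s 2)⁻¹ * (s 2 * (s 5)⁻¹) * s 2 ∈ PP
        rw [T1]
        exact mul_mem hq22 (inv_mem hq25)
      · show (s 3)⁻¹ * (s 2 * (s 5)⁻¹) * s 3 ∈ PP
        rw [T1]
        exact mul_mem hq32 (inv_mem hq35)
      · show (s 4)⁻¹ * (s 2 * (s 5)⁻¹) * s 4 ∈ PP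
        rw [T1]
        exact mul_mem hq42 (inv_mem hq45)
      · show (s 5)⁻¹ * (s 2 * (s 5)⁻¹) * s 5 ∈ PP
        rw [T1]
        exact mul_mem hq52 (inv_mem hq55)
    · interval_cases k
      · show (s 1)⁻¹ * (s 3 * (s 4)⁻¹) * s 1 ∈ PP
        rw [T1]
        exact mul_mem hq13 (inv_mem hq14)
      · show (s 2)⁻¹ * (s 3 * (s 4)⁻¹) * s 2 ∈ PP
        rw [T1]
        exact mul_mem hq23 (inv_mem hq24)
      · show (s 3)⁻¹ * (s 3 * (s 4)⁻¹) * s 3 ∈ PP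
        rw [T1]
        exact mul_mem hq33 (inv_mem hq34)
      · show (s 4)⁻¹ * (s 3 * (s 4)⁻¹) * s 4 ∈ PP
        rw [T1]
        exact mul_mem hq43 (inv_mem hq44)
      · show (s 5)⁻¹ * (s 3 * (s 4)⁻¹) * s 5 ∈ PP
        rw [T1]
        exact mul_mem hq53 (inv_mem hq54)
    · interval_cases k
      · show (s 1)⁻¹ * (s 3 * (s 5)⁻¹) * s 1 ∈ PP
        rw [T1]
        exact mul_mem hq13 (inv_mem hq15)
      · show (s 2)⁻¹ * (s 3 * (s 5)⁻¹) * s 2 ∈ PP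
        rw [T1]
        exact mul_mem hq23 (inv_mem hq25)
      · show (s 3)⁻¹ * (s 3 * (s 5)⁻¹) * s 3 ∈ PP
        rw [T1]
        exact mul_mem hq33 (inv_mem hq35)
      · show (s 4)⁻¹ * (s 3 * (s 5)⁻¹) * s 4 ∈ PP
        rw [T1]
        exact mul_mem hq43 (inv_mem hq45)
      · show (s 5)⁻¹ * (s 3 * (s 5)⁻¹) * s 5 ∈ PP
        rw [T1]
        exact mul_mem hq53 (inv_mem hq55)
    · interval_cases k
      · show (s 1)⁻¹ * (s 4 * (s 5)⁻¹) * s 1 ∈ PP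
        rw [T1]
        exact mul_mem hq14 (inv_mem hq15)
      · show (s 2)⁻¹ * (s 4 * (s 5)⁻¹) * s 2 ∈ PP
        rw [T1]
        exact mul_mem hq24 (inv_mem hq25)
      · show (s 3)⁻¹ * (s 4 * (s 5)⁻¹) * s 3 ∈ PP
        rw [T1]
        exact mul_mem hq34 (inv_mem hq35)
      · show (s 4)⁻¹ * (s 4 * (s 5)⁻¹) * s 4 ∈ PP
        rw [T1]
        exact mul_mem hq44 (inv_mem hq45)
      · show (s 5)⁻¹ * (s 4 * (s 5)⁻¹) * s 5 ∈ PP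
        rw [T1]
        exact mul_mem hq54 (inv_mem hq55)
    · interval_cases k
      · show (s 1)⁻¹ * ((s 1)⁻¹ * s 2) * s 1 ∈ PP
        rw [S14 br1]
        exact mul_mem hq12 hp12
      · show (s 2)⁻¹ * ((s 1)⁻¹ * s 2) * s 2 ∈ PP
        rw [S16 br1]
        exact mul_mem hp12 hq12
      · show (s 3)⁻¹ * ((s 1)⁻¹ * s 2) * s 3 ∈ PP
        rw [S8 (br2).symm (c13.symm)]
        exact mul_mem hq12 hp32
      · show (s 4)⁻¹ * ((s 1)⁻¹ * s 2) * s 4 ∈ PP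
        rw [cconj' (((c14.symm).inv_right).mul_right (c24.symm))]
        exact hq12
      · show (s 5)⁻¹ * ((s 1)⁻¹ * s 2) * s 5 ∈ PP
        rw [cconj' (((c15.symm).inv_right).mul_right (c25.symm))]
        exact hq12
    · interval_cases k
      · show (s 1)⁻¹ * ((s 2)⁻¹ * s 3) * s 1 ∈ PP
        rw [S6 br1 (c13)]
        exact mul_mem hp21 hq23
      · show (s 2)⁻¹ * ((s 2)⁻¹ * s 3) * s 2 ∈ PP
        rw [S14 br2]
        exact mul_mem hq23 hp23
      · show (s 3)⁻¹ * ((s 2)⁻¹ * s 3) * s 3 ∈ PP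
        rw [S16 br2]
        exact mul_mem hp23 hq23
      · show (s 4)⁻¹ * ((s 2)⁻¹ * s 3) * s 4 ∈ PP
        rw [S8 (br3).symm (c24.symm)]
        exact mul_mem hq23 hp43
      · show (s 5)⁻¹ * ((s 2)⁻¹ * s 3) * s 5 ∈ PP
        rw [cconj' (((c25.symm).inv_right).mul_right (c35.symm))]
        exact hq23
    · interval_cases k
      · show (s 1)⁻¹ * ((s 3)⁻¹ * s 4) * s 1 ∈ PP
        rw [cconj' (((c13).inv_right).mul_right (c14))]
        exact hq34
      · show (s 2)⁻¹ * ((s 3)⁻¹ * s 4) * s 2 ∈ PP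
        rw [S6 br2 (c24)]
        exact mul_mem hp32 hq34
      · show (s 3)⁻¹ * ((s 3)⁻¹ * s 4) * s 3 ∈ PP
        rw [S14 br3]
        exact mul_mem hq34 hp34
      · show (s 4)⁻¹ * ((s 3)⁻¹ * s 4) * s 4 ∈ PP
        rw [S16 br3]
        exact mul_mem hp34 hq34
      · show (s 5)⁻¹ * ((s 3)⁻¹ * s 4) * s 5 ∈ PP
        rw [S8 (br4).symm (c35.symm)]
        exact mul_mem hq34 hp54
    · interval_cases k
      · show (s 1)⁻¹ * ((s 4)⁻¹ * s 5) * s 1 ∈ PP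
        rw [cconj' (((c14).inv_right).mul_right (c15))]
        exact hq45
      · show (s 2)⁻¹ * ((s 4)⁻¹ * s 5) * s 2 ∈ PP
        rw [cconj' (((c24).inv_right).mul_right (c25))]
        exact hq45
      · show (s 3)⁻¹ * ((s 4)⁻¹ * s 5) * s 3 ∈ PP
        rw [S6 br3 (c35)]
        exact mul_mem hp43 hq45
      · show (s 4)⁻¹ * ((s 4)⁻¹ * s 5) * s 4 ∈ PP
        rw [S14 br4]
        exact mul_mem hq45 hp45
      · show (s 5)⁻¹ * ((s 4)⁻¹ * s 5) * s 5 ∈ PP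
        rw [S16 br4]
        exact mul_mem hp45 hq45

end B6X

namespace B6X

lemma pow_stab_p (k : ℕ) (hk1 : 1 ≤ k) (hk5 : k ≤ 5) (n : ℕ) :
    ∀ x ∈ PP, s k ^ n * x * (s k ^ n)⁻¹ ∈ PP := by
  induction n with
  | zero => intro x hx; simpa using hx
  | succ m ih =>
    intro x hx
    rw [show s k ^ (m+1) * x * (s k ^ (m+1))⁻¹
        = s k ^ m * (s k * x * (s k)⁻¹) * (s k ^ m)⁻¹ by rw [pow_succ]; group]
    exact ih _ (stab_p k hk1 hk5 x hx)

lemma pow_stab_m (k : ℕ) (hk1 : 1 ≤ k) (hk5 : k ≤ 5) (n : ℕ) :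
    ∀ x ∈ PP, (s k ^ n)⁻¹ * x * s k ^ n ∈ PP := by
  induction n with
  | zero => intro x hx; simpa using hx
  | succ m ih =>
    intro x hx
    rw [show (s k ^ (m+1))⁻¹ * x * s k ^ (m+1)
        = (s k ^ m)⁻¹ * (((s k)⁻¹ * x * s k)) * s k ^ m by rw [pow_succ]; group]
    exact ih _ (stab_m k hk1 hk5 x hx)

def H : Subgroup B6 := Subgroup.closure {a, b, c}

lemma haH : a ∈ H := Subgroup.subset_closure (by simp)
lemma hbH : b ∈ H := Subgroup.subset_closure (by simp)
lemma hcH : c ∈ H := Subgroup.subset_closure (by simp)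

lemma hE3 : c * b * c⁻¹ = p 3 5 := by
  show c * (s 1 * (s 3)⁻¹) * c⁻¹ = s 3 * (s 5)⁻¹
  calc c * (s 1 * (s 3)⁻¹) * c⁻¹ = (c * s 1 * c⁻¹) * (c * (s 3)⁻¹ * c⁻¹) := by group
  _ = s 3 * (s 5)⁻¹ := by rw [semiconj_conj csc1, semiconj_conj csc3.inv_right]

lemma hE1 : c * a * c⁻¹ = s 3 * ((s 3 ^ 10)⁻¹ * s 4 * s 3 ^ 10)⁻¹ := by
  show c * (s 1 * (s 2)⁻¹) * c⁻¹ = _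
  calc c * (s 1 * (s 2)⁻¹) * c⁻¹ = (c * s 1 * c⁻¹) * (c * (s 2)⁻¹ * c⁻¹) := by group
  _ = s 3 * ((s 3 ^ 10)⁻¹ * s 4 * s 3 ^ 10)⁻¹ := by
      rw [semiconj_conj csc1, semiconj_conj csc2.inv_right]

lemma hq34H : q 3 4 ∈ H := by
  have hX : Commute (s 1) (s 3 * ((s 3 ^ 10)⁻¹ * s 4 * s 3 ^ 10)⁻¹) :=
    c13.mul_right ((((c13.pow_right 10).inv_right).mul_right c14).mul_right
      (c13.pow_right 10)).inv_right
  have hb9 : b ^ 9 = s 1 ^ 9 * ((s 3)⁻¹) ^ 9 := Commute.mul_pow c13.inv_right 9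
  have e2 : (b ^ 9)⁻¹ * (c * a * c⁻¹) * b ^ 9 = (q 3 4)⁻¹ := by
    rw [hE1, hb9]
    calc (s 1 ^ 9 * ((s 3)⁻¹) ^ 9)⁻¹ * (s 3 * ((s 3 ^ 10)⁻¹ * s 4 * s 3 ^ 10)⁻¹)
          * (s 1 ^ 9 * ((s 3)⁻¹) ^ 9)
        = (((s 3)⁻¹) ^ 9)⁻¹ * ((s 1 ^ 9)⁻¹ * (s 3 * ((s 3 ^ 10)⁻¹ * s 4 * s 3 ^ 10)⁻¹) * s 1 ^ 9)
          * ((s 3)⁻¹) ^ 9 := by group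
    _ = (((s 3)⁻¹) ^ 9)⁻¹ * (s 3 * ((s 3 ^ 10)⁻¹ * s 4 * s 3 ^ 10)⁻¹) * ((s 3)⁻¹) ^ 9 := by
        rw [cconj' (hX.pow_left 9)]
    _ = (q 3 4)⁻¹ := by show _ = ((s 3)⁻¹ * s 4)⁻¹; group
  have : q 3 4 = ((b ^ 9)⁻¹ * (c * a * c⁻¹) * b ^ 9)⁻¹ := by rw [e2]; group
  rw [this]
  exact inv_mem (mul_mem (mul_mem (inv_mem (pow_mem hbH 9))
    (mul_mem (mul_mem hcH haH) (inv_mem hcH))) (pow_mem hbH 9))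

lemma hp34H : p 3 4 ∈ H := by
  have h : Commute (s 1) ((s 3)⁻¹ * s 4) := (c13.inv_right).mul_right c14
  have e : b⁻¹ * q 3 4 * b = s 4 * (s 3)⁻¹ := by
    calc b⁻¹ * q 3 4 * b
        = s 3 * ((s 1)⁻¹ * ((s 3)⁻¹ * s 4) * s 1) * (s 3)⁻¹ := by
          show (s 1 * (s 3)⁻¹)⁻¹ * ((s 3)⁻¹ * s 4) * (s 1 * (s 3)⁻¹) = _; group
    _ = s 3 * ((s 3)⁻¹ * s 4) * (s 3)⁻¹ := by rw [cconj' h]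
    _ = s 4 * (s 3)⁻¹ := by group
  have : p 3 4 = (b⁻¹ * q 3 4 * b)⁻¹ := by rw [e]; show s 3 * (s 4)⁻¹ = _; group
  rw [this]
  exact inv_mem (mul_mem (mul_mem (inv_mem hbH) hq34H) hbH)

lemma hp12H : p 1 2 ∈ H := haH
lemma hp13H : p 1 3 ∈ H := hbH
lemma hp23H : p 2 3 ∈ H := by
  rw [show p 2 3 = a⁻¹ * b by show s 2 * (s 3)⁻¹ = (s 1 * (s 2)⁻¹)⁻¹ * (s 1 * (s 3)⁻¹); group]
  exact mul_mem (inv_mem haH) hbH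
lemma hp14H : p 1 4 ∈ H := by
  rw [show p 1 4 = b * p 3 4 by show s 1 * (s 4)⁻¹ = (s 1 * (s 3)⁻¹) * (s 3 * (s 4)⁻¹); group]
  exact mul_mem hbH hp34H
lemma hp35H : p 3 5 ∈ H := by
  rw [← hE3]; exact mul_mem (mul_mem hcH hbH) (inv_mem hcH)
lemma hp15H : p 1 5 ∈ H := by
  rw [show p 1 5 = b * p 3 5 by show s 1 * (s 5)⁻¹ = (s 1 * (s 3)⁻¹) * (s 3 * (s 5)⁻¹); group]
  exact mul_mem hbH hp35H
lemma hp24H : p 2 4 ∈ H := by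
  rw [show p 2 4 = a⁻¹ * p 1 4 by
    show s 2 * (s 4)⁻¹ = (s 1 * (s 2)⁻¹)⁻¹ * (s 1 * (s 4)⁻¹); group]
  exact mul_mem (inv_mem haH) hp14H
lemma hp25H : p 2 5 ∈ H := by
  rw [show p 2 5 = a⁻¹ * p 1 5 by
    show s 2 * (s 5)⁻¹ = (s 1 * (s 2)⁻¹)⁻¹ * (s 1 * (s 5)⁻¹); group]
  exact mul_mem (inv_mem haH) hp15H
lemma hp45H : p 4 5 ∈ H := by
  rw [show p 4 5 = (p 1 4)⁻¹ * p 1 5 by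
    show s 4 * (s 5)⁻¹ = (s 1 * (s 4)⁻¹)⁻¹ * (s 1 * (s 5)⁻¹); group]
  exact mul_mem (inv_mem hp14H) hp15H
lemma hq23H : q 2 3 ∈ H := by
  have e : (p 2 4)⁻¹ * (q 3 4)⁻¹ = q 2 3 := by
    calc (p 2 4)⁻¹ * (q 3 4)⁻¹ = (s 4 * (s 2)⁻¹ * (s 4)⁻¹) * s 3 := by
          show (s 2 * (s 4)⁻¹)⁻¹ * ((s 3)⁻¹ * s 4)⁻¹ = _; group
    _ = (s 2)⁻¹ * s 3 := by rw [cconj c24.symm.inv_right]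
  rw [← e]; exact mul_mem (inv_mem hp24H) (inv_mem hq34H)
lemma hq12H : q 1 2 ∈ H := by
  have e : (p 1 3)⁻¹ * (q 2 3)⁻¹ = q 1 2 := by
    calc (p 1 3)⁻¹ * (q 2 3)⁻¹ = (s 3 * (s 1)⁻¹ * (s 3)⁻¹) * s 2 := by
          show (s 1 * (s 3)⁻¹)⁻¹ * ((s 2)⁻¹ * s 3)⁻¹ = _; group
    _ = (s 1)⁻¹ * s 2 := by rw [cconj c13.symm.inv_right]
  rw [← e]; exact mul_mem (inv_mem hp13H) (inv_mem hq23H)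
lemma hq45H : q 4 5 ∈ H := by
  have h : Commute (s 1) ((s 4)⁻¹ * s 5) := (c14.inv_right).mul_right c15
  have e : p 1 4 * (p 1 5)⁻¹ = q 4 5 := by
    calc p 1 4 * (p 1 5)⁻¹ = s 1 * ((s 4)⁻¹ * s 5) * (s 1)⁻¹ := by
          show (s 1 * (s 4)⁻¹) * (s 1 * (s 5)⁻¹)⁻¹ = _; group
    _ = (s 4)⁻¹ * s 5 := by rw [cconj h]
  rw [← e]; exact mul_mem hp14H (inv_mem hp15H)

lemma PP_le_H : PP ≤ H := by
  rw [PP, Subgroup.closure_le]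
  intro x hx
  simp only [Pset, Set.mem_insert_iff, Set.mem_singleton_iff] at hx
  rcases hx with rfl|rfl|rfl|rfl|rfl|rfl|rfl|rfl|rfl|rfl|rfl|rfl|rfl|rfl
  · exact hp12H
  · exact hp13H
  · exact hp14H
  · exact hp15H
  · exact hp23H
  · exact hp24H
  · exact hp25H
  · exact hp34H
  · exact hp35H
  · exact hp45H
  · exact hq12H
  · exact hq23H
  · exact hq34H
  · exact hq45H

end B6X

namespace B6X

lemma A2 : (α 6) ^ 2 * (s 1 ^ 10)⁻¹ = c := rfl

lemma k1p : s 1 * c * (s 1)⁻¹ = p 1 3 * c := by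
  show s 1 * ((α 6) ^ 2 * (s 1 ^ 10)⁻¹) * (s 1)⁻¹ = (s 1 * (s 3)⁻¹) * ((α 6) ^ 2 * (s 1 ^ 10)⁻¹)
  calc s 1 * ((α 6) ^ 2 * (s 1 ^ 10)⁻¹) * (s 1)⁻¹
      = s 1 * ((α 6) ^ 2 * (s 1)⁻¹) * (s 1 ^ 10)⁻¹ := by group
  _ = s 1 * ((s 3)⁻¹ * (α 6) ^ 2) * (s 1 ^ 10)⁻¹ := by rw [(sc13.inv_right).eq]
  _ = (s 1 * (s 3)⁻¹) * ((α 6) ^ 2 * (s 1 ^ 10)⁻¹) := by group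

lemma k1m : (s 1)⁻¹ * c * s 1 = q 1 3 * c := by
  show (s 1)⁻¹ * ((α 6) ^ 2 * (s 1 ^ 10)⁻¹) * s 1 = ((s 1)⁻¹ * s 3) * ((α 6) ^ 2 * (s 1 ^ 10)⁻¹)
  calc (s 1)⁻¹ * ((α 6) ^ 2 * (s 1 ^ 10)⁻¹) * s 1
      = (s 1)⁻¹ * ((α 6) ^ 2 * s 1) * (s 1 ^ 10)⁻¹ := by group
  _ = (s 1)⁻¹ * (s 3 * (α 6) ^ 2) * (s 1 ^ 10)⁻¹ := by rw [sc13.eq]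
  _ = ((s 1)⁻¹ * s 3) * ((α 6) ^ 2 * (s 1 ^ 10)⁻¹) := by group

lemma k3p : s 3 * c * (s 3)⁻¹ = c * p 1 3 := by
  show s 3 * ((α 6) ^ 2 * (s 1 ^ 10)⁻¹) * (s 3)⁻¹ = ((α 6) ^ 2 * (s 1 ^ 10)⁻¹) * (s 1 * (s 3)⁻¹)
  calc s 3 * ((α 6) ^ 2 * (s 1 ^ 10)⁻¹) * (s 3)⁻¹
      = (s 3 * (α 6) ^ 2) * ((s 1 ^ 10)⁻¹ * (s 3)⁻¹) := by group
  _ = ((α 6) ^ 2 * s 1) * ((s 1 ^ 10)⁻¹ * (s 3)⁻¹) := by rw [← sc13.eq]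
  _ = (α 6) ^ 2 * (s 1 * (s 1 ^ 10)⁻¹) * (s 3)⁻¹ := by group
  _ = (α 6) ^ 2 * ((s 1 ^ 10)⁻¹ * s 1) * (s 3)⁻¹ := by group
  _ = ((α 6) ^ 2 * (s 1 ^ 10)⁻¹) * (s 1 * (s 3)⁻¹) := by group

lemma k3m : (s 3)⁻¹ * c * s 3 = c * q 1 3 := by
  show (s 3)⁻¹ * ((α 6) ^ 2 * (s 1 ^ 10)⁻¹) * s 3 = ((α 6) ^ 2 * (s 1 ^ 10)⁻¹) * ((s 1)⁻¹ * s 3)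
  calc (s 3)⁻¹ * ((α 6) ^ 2 * (s 1 ^ 10)⁻¹) * s 3
      = ((s 3)⁻¹ * (α 6) ^ 2) * ((s 1 ^ 10)⁻¹ * s 3) := by group
  _ = ((α 6) ^ 2 * (s 1)⁻¹) * ((s 1 ^ 10)⁻¹ * s 3) := by rw [← (sc13.inv_right).eq]
  _ = ((α 6) ^ 2 * (s 1 ^ 10)⁻¹) * ((s 1)⁻¹ * s 3) := by group

lemma k5p : s 5 * c * (s 5)⁻¹ = c * p 3 5 := by
  have hcm : Commute (s 3) ((s 1 ^ 10)⁻¹) := ((c13.symm.pow_right 10)).inv_right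
  show s 5 * ((α 6) ^ 2 * (s 1 ^ 10)⁻¹) * (s 5)⁻¹ = ((α 6) ^ 2 * (s 1 ^ 10)⁻¹) * (s 3 * (s 5)⁻¹)
  calc s 5 * ((α 6) ^ 2 * (s 1 ^ 10)⁻¹) * (s 5)⁻¹
      = (s 5 * (α 6) ^ 2) * ((s 1 ^ 10)⁻¹ * (s 5)⁻¹) := by group
  _ = ((α 6) ^ 2 * s 3) * ((s 1 ^ 10)⁻¹ * (s 5)⁻¹) := by rw [← sc35.eq]
  _ = (α 6) ^ 2 * (s 3 * (s 1 ^ 10)⁻¹) * (s 5)⁻¹ := by group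
  _ = (α 6) ^ 2 * ((s 1 ^ 10)⁻¹ * s 3) * (s 5)⁻¹ := by rw [hcm.eq]
  _ = ((α 6) ^ 2 * (s 1 ^ 10)⁻¹) * (s 3 * (s 5)⁻¹) := by group

lemma k5m : (s 5)⁻¹ * c * s 5 = c * q 3 5 := by
  have hcm : Commute ((s 3)⁻¹) ((s 1 ^ 10)⁻¹) := ((c13.symm.pow_right 10)).inv_right.inv_left
  show (s 5)⁻¹ * ((α 6) ^ 2 * (s 1 ^ 10)⁻¹) * s 5 = ((α 6) ^ 2 * (s 1 ^ 10)⁻¹) * ((s 3)⁻¹ * s 5)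
  calc (s 5)⁻¹ * ((α 6) ^ 2 * (s 1 ^ 10)⁻¹) * s 5
      = ((s 5)⁻¹ * (α 6) ^ 2) * ((s 1 ^ 10)⁻¹ * s 5) := by group
  _ = ((α 6) ^ 2 * (s 3)⁻¹) * ((s 1 ^ 10)⁻¹ * s 5) := by rw [← (sc35.inv_right).eq]
  _ = (α 6) ^ 2 * ((s 3)⁻¹ * (s 1 ^ 10)⁻¹) * s 5 := by group
  _ = (α 6) ^ 2 * ((s 1 ^ 10)⁻¹ * (s 3)⁻¹) * s 5 := by rw [hcm.eq]
  _ = ((α 6) ^ 2 * (s 1 ^ 10)⁻¹) * ((s 3)⁻¹ * s 5) := by group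

lemma k4p : s 4 * c * (s 4)⁻¹ = c * (s 1 ^ 10 * p 2 4 * (s 1 ^ 10)⁻¹) := by
  have hcm : Commute ((s 1 ^ 10)⁻¹) ((s 4)⁻¹) := ((c14.pow_left 10).inv_left).inv_right
  show s 4 * ((α 6) ^ 2 * (s 1 ^ 10)⁻¹) * (s 4)⁻¹
      = ((α 6) ^ 2 * (s 1 ^ 10)⁻¹) * (s 1 ^ 10 * (s 2 * (s 4)⁻¹) * (s 1 ^ 10)⁻¹)
  calc s 4 * ((α 6) ^ 2 * (s 1 ^ 10)⁻¹) * (s 4)⁻¹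
      = (s 4 * (α 6) ^ 2) * ((s 1 ^ 10)⁻¹ * (s 4)⁻¹) := by group
  _ = ((α 6) ^ 2 * s 2) * ((s 1 ^ 10)⁻¹ * (s 4)⁻¹) := by rw [← sc24.eq]
  _ = ((α 6) ^ 2 * s 2) * ((s 4)⁻¹ * (s 1 ^ 10)⁻¹) := by rw [hcm.eq]
  _ = ((α 6) ^ 2 * (s 1 ^ 10)⁻¹) * (s 1 ^ 10 * (s 2 * (s 4)⁻¹) * (s 1 ^ 10)⁻¹) := by group

lemma k4m : (s 4)⁻¹ * c * s 4 = c * (s 1 ^ 10 * q 2 4 * (s 1 ^ 10)⁻¹) := by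
  have hcm : Commute ((s 1 ^ 10)⁻¹) (s 4) := (c14.pow_left 10).inv_left
  show (s 4)⁻¹ * ((α 6) ^ 2 * (s 1 ^ 10)⁻¹) * s 4
      = ((α 6) ^ 2 * (s 1 ^ 10)⁻¹) * (s 1 ^ 10 * ((s 2)⁻¹ * s 4) * (s 1 ^ 10)⁻¹)
  calc (s 4)⁻¹ * ((α 6) ^ 2 * (s 1 ^ 10)⁻¹) * s 4
      = ((s 4)⁻¹ * (α 6) ^ 2) * ((s 1 ^ 10)⁻¹ * s 4) := by group
  _ = ((α 6) ^ 2 * (s 2)⁻¹) * ((s 1 ^ 10)⁻¹ * s 4) := by rw [← (sc24.inv_right).eq]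
  _ = ((α 6) ^ 2 * (s 2)⁻¹) * (s 4 * (s 1 ^ 10)⁻¹) := by rw [hcm.eq]
  _ = ((α 6) ^ 2 * (s 1 ^ 10)⁻¹) * (s 1 ^ 10 * ((s 2)⁻¹ * s 4) * (s 1 ^ 10)⁻¹) := by group

lemma k2p : s 2 * c * (s 2)⁻¹ = p 2 3 * ((s 3 ^ 9)⁻¹ * (q 3 4)⁻¹ * s 3 ^ 9) * c := by
  have h2 : c * (s 2)⁻¹ * c⁻¹ = ((s 3 ^ 10)⁻¹ * s 4 * s 3 ^ 10)⁻¹ :=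
    semiconj_conj csc2.inv_right
  calc s 2 * c * (s 2)⁻¹ = s 2 * (c * (s 2)⁻¹ * c⁻¹) * c := by group
  _ = s 2 * ((s 3 ^ 10)⁻¹ * s 4 * s 3 ^ 10)⁻¹ * c := by rw [h2]
  _ = p 2 3 * ((s 3 ^ 9)⁻¹ * (q 3 4)⁻¹ * s 3 ^ 9) * c := by
      show _ = (s 2 * (s 3)⁻¹) * ((s 3 ^ 9)⁻¹ * ((s 3)⁻¹ * s 4)⁻¹ * s 3 ^ 9) * c
      group

lemma k2m : (s 2)⁻¹ * c * s 2 = q 2 3 * ((s 3 ^ 10)⁻¹ * q 3 4 * s 3 ^ 10) * c := by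
  have h2 : c * s 2 * c⁻¹ = (s 3 ^ 10)⁻¹ * s 4 * s 3 ^ 10 := semiconj_conj csc2
  calc (s 2)⁻¹ * c * s 2 = (s 2)⁻¹ * (c * s 2 * c⁻¹) * c := by group
  _ = (s 2)⁻¹ * ((s 3 ^ 10)⁻¹ * s 4 * s 3 ^ 10) * c := by rw [h2]
  _ = q 2 3 * ((s 3 ^ 10)⁻¹ * q 3 4 * s 3 ^ 10) * c := by
      show _ = ((s 2)⁻¹ * s 3) * ((s 3 ^ 10)⁻¹ * ((s 3)⁻¹ * s 4) * s 3 ^ 10) * c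
      group

lemma Hstab_p (k : ℕ) (hk1 : 1 ≤ k) (hk5 : k ≤ 5) : ∀ x ∈ H, s k * x * (s k)⁻¹ ∈ H := by
  intro x hx
  induction hx using Subgroup.closure_induction with
  | one => simpa using one_mem H
  | mul x y hx hy ihx ihy =>
    rw [show s k * (x * y) * (s k)⁻¹ = (s k * x * (s k)⁻¹) * (s k * y * (s k)⁻¹) by group]
    exact mul_mem ihx ihy
  | inv x hx ihx =>
    rw [show s k * x⁻¹ * (s k)⁻¹ = (s k * x * (s k)⁻¹)⁻¹ by group]
    exact inv_mem ihx
  | mem x hx =>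
    simp only [Set.mem_insert_iff, Set.mem_singleton_iff] at hx
    rcases hx with rfl|rfl|rfl
    · exact PP_le_H (stab_p k hk1 hk5 _ hp12)
    · exact PP_le_H (stab_p k hk1 hk5 _ hp13)
    · interval_cases k
      · rw [k1p]; exact mul_mem (PP_le_H hp13) hcH
      · rw [k2p]
        exact mul_mem (mul_mem (PP_le_H hp23)
          (PP_le_H (pow_stab_m 3 (by norm_num) (by norm_num) 9 _ (inv_mem hq34)))) hcH
      · rw [k3p]; exact mul_mem hcH (PP_le_H hp13)
      · rw [k4p]
        exact mul_mem hcH (PP_le_H (pow_stab_p 1 (by norm_num) (by norm_num) 10 _ hp24))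
      · rw [k5p]; exact mul_mem hcH (PP_le_H hp35)

lemma Hstab_m (k : ℕ) (hk1 : 1 ≤ k) (hk5 : k ≤ 5) : ∀ x ∈ H, (s k)⁻¹ * x * s k ∈ H := by
  intro x hx
  induction hx using Subgroup.closure_induction with
  | one => simpa using one_mem H
  | mul x y hx hy ihx ihy =>
    rw [show (s k)⁻¹ * (x * y) * s k = ((s k)⁻¹ * x * s k) * ((s k)⁻¹ * y * s k) by group]
    exact mul_mem ihx ihy
  | inv x hx ihx =>
    rw [show (s k)⁻¹ * x⁻¹ * s k = ((s k)⁻¹ * x * s k)⁻¹ by group]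
    exact inv_mem ihx
  | mem x hx =>
    simp only [Set.mem_insert_iff, Set.mem_singleton_iff] at hx
    rcases hx with rfl|rfl|rfl
    · exact PP_le_H (stab_m k hk1 hk5 _ hp12)
    · exact PP_le_H (stab_m k hk1 hk5 _ hp13)
    · interval_cases k
      · rw [k1m]; exact mul_mem (PP_le_H hq13) hcH
      · rw [k2m]
        exact mul_mem (mul_mem (PP_le_H hq23)
          (PP_le_H (pow_stab_m 3 (by norm_num) (by norm_num) 10 _ hq34))) hcH
      · rw [k3m]; exact mul_mem hcH (PP_le_H hq13)
      · rw [k4m]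
        exact mul_mem hcH (PP_le_H (pow_stab_p 1 (by norm_num) (by norm_num) 10 _ hq24))
      · rw [k5m]; exact mul_mem hcH (PP_le_H hq35)

def Kn : Subgroup B6 where
  carrier := {n | ∀ g ∈ H, n * g * n⁻¹ ∈ H ∧ n⁻¹ * g * n ∈ H}
  one_mem' := by intro g hg; refine ⟨?_, ?_⟩ <;> simpa using hg
  mul_mem' := by
    intro x y hx hy g hg
    constructor
    · rw [show x * y * g * (x * y)⁻¹ = x * (y * g * y⁻¹) * x⁻¹ by group]
      exact (hx _ ((hy g hg).1)).1
    · rw [show (x * y)⁻¹ * g * (x * y) = y⁻¹ * (x⁻¹ * g * x) * y by group]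
      exact (hy _ ((hx g hg).2)).2
  inv_mem' := by
    intro x hx g hg
    constructor
    · rw [show x⁻¹ * g * x⁻¹⁻¹ = x⁻¹ * g * x by group]
      exact (hx g hg).2
    · rw [show x⁻¹⁻¹ * g * x⁻¹ = x * g * x⁻¹ by group]
      exact (hx g hg).1

lemma mem_Kn (n : B6) : n ∈ Kn := by
  apply PresentedGroup.generated_by
  intro j
  fin_cases j
  · exact fun g hg => ⟨Hstab_p 1 (by norm_num) (by norm_num) g hg,
      Hstab_m 1 (by norm_num) (by norm_num) g hg⟩
  · exact fun g hg => ⟨Hstab_p 2 (by norm_num) (by norm_num) g hg,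
      Hstab_m 2 (by norm_num) (by norm_num) g hg⟩
  · exact fun g hg => ⟨Hstab_p 3 (by norm_num) (by norm_num) g hg,
      Hstab_m 3 (by norm_num) (by norm_num) g hg⟩
  · exact fun g hg => ⟨Hstab_p 4 (by norm_num) (by norm_num) g hg,
      Hstab_m 4 (by norm_num) (by norm_num) g hg⟩
  · exact fun g hg => ⟨Hstab_p 5 (by norm_num) (by norm_num) g hg,
      Hstab_m 5 (by norm_num) (by norm_num) g hg⟩

instance H_normal : H.Normal := by
  constructor
  intro g hg n
  exact ((mem_Kn n) g hg).1

end B6X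

namespace B6X

section CommLe

open commutatorElement

local notation "ρ" => QuotientGroup.mk' (commutator B6)

lemma rho_comm : ∀ u v : B6, Commute (ρ u) (ρ v) := by
  intro u v
  have h1 : ⁅u, v⁆ ∈ commutator B6 :=
    Subgroup.commutator_mem_commutator (Subgroup.mem_top u) (Subgroup.mem_top v)
  have h2 : ρ ⁅u, v⁆ = 1 := (QuotientGroup.eq_one_iff _).mpr h1
  rw [map_commutatorElement] at h2
  exact commutatorElement_eq_one_iff_commute.mp h2

lemma rho12 : ρ (s 1) = ρ (s 2) := by
  have h := congrArg (fun z => ρ z) br1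
  simp only [map_mul] at h
  exact braid_comm_eq h (rho_comm _ _)

lemma rho23 : ρ (s 2) = ρ (s 3) := by
  have h := congrArg (fun z => ρ z) br2
  simp only [map_mul] at h
  exact braid_comm_eq h (rho_comm _ _)

lemma rho34 : ρ (s 3) = ρ (s 4) := by
  have h := congrArg (fun z => ρ z) br3
  simp only [map_mul] at h
  exact braid_comm_eq h (rho_comm _ _)

lemma rho45 : ρ (s 4) = ρ (s 5) := by
  have h := congrArg (fun z => ρ z) br4
  simp only [map_mul] at h
  exact braid_comm_eq h (rho_comm _ _)

lemma a_mem_comm : a ∈ commutator B6 := by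
  apply (QuotientGroup.eq_one_iff _).mp
  show ρ (s 1 * (s 2)⁻¹) = 1
  rw [map_mul, map_inv, rho12]
  group

lemma b_mem_comm : b ∈ commutator B6 := by
  apply (QuotientGroup.eq_one_iff _).mp
  show ρ (s 1 * (s 3)⁻¹) = 1
  rw [map_mul, map_inv, rho12, rho23]
  group

lemma c_mem_comm : c ∈ commutator B6 := by
  apply (QuotientGroup.eq_one_iff _).mp
  show ρ ((α 6) ^ 2 * (s 1 ^ 10)⁻¹) = 1
  rw [map_mul, map_inv, map_pow, map_pow, A_eq, map_mul, map_mul, map_mul, map_mul,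
    rho12, rho23, rho34, rho45, ← rho45, ← rho34, ← rho23, ← rho12]
  rw [show ρ (s 1) * ρ (s 1) * ρ (s 1) * ρ (s 1) * ρ (s 1) = ρ (s 1) ^ 5 by
    rw [pow_succ, pow_succ, pow_succ, pow_succ, pow_one], ← pow_mul]
  norm_num

end CommLe

section LeH

open commutatorElement

def N : Subgroup B6 := Subgroup.normalClosure ({a} : Set B6)

instance N_normal : N.Normal := Subgroup.normalClosure_normal

local notation "π" => QuotientGroup.mk' N

lemma pia : π a = 1 :=
  (QuotientGroup.eq_one_iff _).mpr (Subgroup.subset_normalClosure (Set.mem_singleton a))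

lemma pi12 : π (s 1) = π (s 2) := by
  have h : π (s 1) * (π (s 2))⁻¹ = 1 := by
    have := pia
    rwa [show a = s 1 * (s 2)⁻¹ from rfl, map_mul, map_inv] at this
  exact mul_inv_eq_one.mp h

lemma pi23 : π (s 2) = π (s 3) := by
  have h := congrArg (fun z => π z) br2
  simp only [map_mul] at h
  have hc : Commute (π (s 2)) (π (s 3)) := by
    have := c13.map (QuotientGroup.mk' N)
    rwa [pi12] at this
  exact braid_comm_eq h hc

lemma pi34 : π (s 3) = π (s 4) := by
  have h := congrArg (fun z => π z) br3
  simp only [map_mul] at h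
  have hc : Commute (π (s 3)) (π (s 4)) := by
    have := c24.map (QuotientGroup.mk' N)
    rwa [pi23] at this
  exact braid_comm_eq h hc

lemma pi45 : π (s 4) = π (s 5) := by
  have h := congrArg (fun z => π z) br4
  simp only [map_mul] at h
  have hc : Commute (π (s 4)) (π (s 5)) := by
    have := c35.map (QuotientGroup.mk' N)
    rwa [pi34] at this
  exact braid_comm_eq h hc

lemma pi_zpowers (x : B6) : π x ∈ Subgroup.zpowers (π (s 1)) := by
  have : x ∈ (Subgroup.zpowers (π (s 1))).comap (QuotientGroup.mk' N) := by
    apply PresentedGroup.generated_by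
    intro j
    fin_cases j
    · exact (Subgroup.mem_zpowers _ : π (s 1) ∈ _)
    · exact (show π (s 2) ∈ _ by rw [← pi12]; exact Subgroup.mem_zpowers _)
    · exact (show π (s 3) ∈ _ by rw [← pi23, ← pi12]; exact Subgroup.mem_zpowers _)
    · exact (show π (s 4) ∈ _ by rw [← pi34, ← pi23, ← pi12]; exact Subgroup.mem_zpowers _)
    · exact (show π (s 5) ∈ _ by rw [← pi45, ← pi34, ← pi23, ← pi12]; exact Subgroup.mem_zpowers _)
  exact this

lemma comm_le_N : commutator B6 ≤ N := by
  rw [commutator_def, Subgroup.commutator_le]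
  intro g1 _ g2 _
  apply (QuotientGroup.eq_one_iff _).mp
  show π ⁅g1, g2⁆ = 1
  rw [map_commutatorElement]
  apply commutatorElement_eq_one_iff_commute.mpr
  obtain ⟨m, hm⟩ := pi_zpowers g1
  obtain ⟨n, hn⟩ := pi_zpowers g2
  rw [← hm, ← hn]
  exact Commute.zpow_zpow (Commute.refl _) m n

lemma N_le_H : N ≤ H :=
  Subgroup.normalClosure_le_normal (Set.singleton_subset_iff.mpr haH)

lemma comm_le_H : commutator B6 ≤ H := le_trans comm_le_N N_le_H

end LeH

lemma H_le_comm : H ≤ commutator B6 := by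
  rw [H, Subgroup.closure_le]
  intro x hx
  simp only [Set.mem_insert_iff, Set.mem_singleton_iff] at hx
  rcases hx with rfl|rfl|rfl
  · exact a_mem_comm
  · exact b_mem_comm
  · exact c_mem_comm

end B6X

theorem B6_commutator_three_generators :
    Subgroup.closure ({σ 1 * (σ 2)⁻¹, σ 1 * (σ 3)⁻¹,
        (α 6) ^ 2 * ((σ 1 : BraidGroup 6) ^ 10)⁻¹} : Set (BraidGroup 6)) =
      commutator (BraidGroup 6) := by
  exact le_antisymm B6X.H_le_comm B6X.comm_le_H
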